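/- The set of minimal absent words of a string S of length n over an alphabet of size σ ≥ 2 has cardinality at most σ·n + σ (in particular it is finite, of size O(σn)). -/

import Mathlib

def IsMAW {α : Type*} (w S : List α) : Prop :=
  ¬ w <:+: S ∧ ∀ v : List α, v <:+: w → v ≠ w → v <:+: S

lemma infix_exists_drop {α : Type*} {x S : List α} (h : x <:+: S) :
    ∃ p, x <+: S.drop p := by
  obtain ⟨s, t, rfl⟩ := h
  exact ⟨s.length, by simp⟩

theorem maw_card_le {α : Type*} [Fintype α] (hσ : 2 ≤ Fintype.card α) (S : List α) :
    {w : List α | IsMAW w S}.Finite ∧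
      {w : List α | IsMAW w S}.ncard ≤ Fintype.card α * S.length + Fintype.card α := by
  classical
  have hnea : Nonempty α := Fintype.card_pos_iff.mp (by omega)
  inhabit α
  set A : Set (List α) := {w | IsMAW w S ∧ w.length ≤ 1} with hA
  set B : Set (List α) := {w | IsMAW w S ∧ 2 ≤ w.length} with hB
  have hunion : {w : List α | IsMAW w S} = A ∪ B := by
    ext w
    simp only [Set.mem_setOf_eq, Set.mem_union, hA, hB, Set.mem_setOf_eq]
    constructor
    · intro h
      rcases le_or_gt w.length 1 with h1 | h1
      · exact Or.inl ⟨h, h1⟩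
      · exact Or.inr ⟨h, h1⟩
    · rintro (⟨h, _⟩ | ⟨h, _⟩) <;> exact h
  -- MAWs are nonempty
  have hne : ∀ w ∈ A ∪ B, w ≠ ([] : List α) := by
    rintro w (⟨hm, _⟩ | ⟨hm, _⟩) rfl <;> exact hm.1 List.nil_infix
  -- A : each element is [a]
  have hAform : ∀ w ∈ A, w = [w.headI] := by
    rintro w ⟨hm, hlen⟩
    have hw : w ≠ [] := by rintro rfl; exact hm.1 List.nil_infix
    match w, hw with
    | [a], _ => rfl
    | a :: b :: l, _ => simp at hlen
  have hAinj : Set.InjOn (fun w : List α => w.headI) A := by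
    intro w hw w' hw' h
    rw [hAform w hw, hAform w' hw']
    exact congrArg (fun a => [a]) h
  have hAfin : A.Finite := by
    apply Set.Finite.of_finite_image _ hAinj
    exact Set.Finite.subset (Set.finite_univ) (Set.subset_univ _)
  have hAcard : A.ncard ≤ Fintype.card α := by
    rw [← Set.ncard_image_of_injOn hAinj]
    calc ((fun w : List α => w.headI) '' A).ncard ≤ (Set.univ : Set α).ncard :=
          Set.ncard_le_ncard (Set.subset_univ _) Set.finite_univ
      _ = Fintype.card α := by rw [Set.ncard_univ, Nat.card_eq_fintype_card]
  -- B : injection into α × range n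
  have hBtail : ∀ w ∈ B, w.tail ≠ [] ∧ ∃ p, w.tail <+: S.drop p := by
    rintro w ⟨hm, hlen⟩
    have ht : w.tail ≠ [] := by
      intro h
      have := @List.length_tail _ w
      rw [h] at this
      simp at this
      omega
    refine ⟨ht, ?_⟩
    apply infix_exists_drop
    apply hm.2
    · exact (List.tail_suffix w).isInfix
    · intro h
      have := congrArg List.length h
      simp [List.length_tail] at this
      omega
  let g : List α → α × ℕ := fun w =>
    (w.headI, if h : ∃ p, w.tail <+: S.drop p then Nat.find h else 0)
  have hgspec : ∀ w ∈ B, w.tail <+: S.drop (g w).2 ∧ (g w).2 < S.length := by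
    intro w hw
    obtain ⟨ht, hex⟩ := hBtail w hw
    have hsp : w.tail <+: S.drop (g w).2 := by
      simp only [g, dif_pos hex]
      exact Nat.find_spec hex
    refine ⟨hsp, ?_⟩
    by_contra hlt
    push_neg at hlt
    have : S.drop (g w).2 = [] := List.drop_eq_nil_of_le hlt
    rw [this] at hsp
    exact ht (List.prefix_nil.mp hsp)
  have hBcons : ∀ w ∈ B, w = w.headI :: w.tail := by
    rintro w ⟨hm, hlen⟩
    cases w with
    | nil => simp at hlen
    | cons a l => rfl
  have hBinj : Set.InjOn g B := by
    intro w hw w' hw' h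
    have h1 : w.headI = w'.headI := congrArg Prod.fst h
    have h2 : (g w).2 = (g w').2 := congrArg Prod.snd h
    obtain ⟨hp, _⟩ := hgspec w hw
    obtain ⟨hp', _⟩ := hgspec w' hw'
    rw [h2] at hp
    -- tails are both prefixes of the same list
    have hcomp := List.prefix_or_prefix_of_prefix hp hp'
    -- wlog
    by_contra hne'
    have key : ∀ u v : List α, u ∈ B → v ∈ B → u.headI = v.headI →
        u.tail <+: v.tail → u ≠ v → False := by
      intro u v hu hv hh htp huv
      have huinf : u <:+: v := by
        rw [hBcons u hu, hBcons v hv, hh]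
        exact (List.cons_prefix_cons.mpr ⟨rfl, htp⟩).isInfix
      have := hv.1.2 u huinf huv
      exact hu.1.1 this
    rcases hcomp with hc | hc
    · exact key w w' hw hw' h1 hc hne'
    · exact key w' w hw' hw h1.symm hc (Ne.symm hne')
  have hBsub : g '' B ⊆ (↑((Finset.univ : Finset α) ×ˢ Finset.range S.length) : Set (α × ℕ)) := by
    rintro _ ⟨w, hw, rfl⟩
    simp only [Finset.coe_product, Set.mem_prod, Finset.mem_coe, Finset.mem_univ,
      Finset.coe_range, Set.mem_Iio, true_and]
    exact (hgspec w hw).2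
  have hBfin : B.Finite := by
    apply Set.Finite.of_finite_image _ hBinj
    exact Set.Finite.subset ((Finset.univ : Finset α) ×ˢ Finset.range S.length).finite_toSet hBsub
  have hBcard : B.ncard ≤ Fintype.card α * S.length := by
    rw [← Set.ncard_image_of_injOn hBinj]
    calc (g '' B).ncard
        ≤ (↑((Finset.univ : Finset α) ×ˢ Finset.range S.length) : Set (α × ℕ)).ncard :=
          Set.ncard_le_ncard hBsub (Finset.finite_toSet _)
      _ = ((Finset.univ : Finset α) ×ˢ Finset.range S.length).card := Set.ncard_coe_finset _
      _ = Fintype.card α * S.length := by simp [Finset.card_product]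
  rw [hunion]
  refine ⟨hAfin.union hBfin, ?_⟩
  calc (A ∪ B).ncard ≤ A.ncard + B.ncard := Set.ncard_union_le A B
    _ ≤ Fintype.card α + Fintype.card α * S.length := Nat.add_le_add hAcard hBcard
    _ = Fintype.card α * S.length + Fintype.card α := by ring
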